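/- Instantaneous optimistic regret bound: let H be a separable real Hilbert space, ρ > 0, 𝒳 ⊆ H, θ* ∈ H, and suppose x* ∈ 𝒳 maximizes x ↦ ⟨x, θ*⟩ over 𝒳. Let V be a bounded positive self-adjoint operator on H, c ∈ H, η ≥ 0, and define the ellipsoid Π = { f ∈ H : ‖(V + ρI)^{1/2}(f − c)‖ ≤ η }. If θ* ∈ Π and the pair (X, θ̃) ∈ 𝒳 × Π maximizes (x, f) ↦ ⟨f, x⟩ over 𝒳 × Π, then ⟨x*, θ*⟩ − ⟨X, θ*⟩ ≤ 2 η ‖(V + ρI)^{-1/2} X‖. -/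

import Mathlib

open MeasureTheory Filter Real
open scoped RealInnerProductSpace

noncomputable def outerProd {H : Type*} [NormedAddCommGroup H] [InnerProductSpace ℝ H]
    (x : H) : H →L[ℝ] H :=
  (innerSL ℝ x).smulRight x

theorem stmt_16
    {H : Type*} [NormedAddCommGroup H] [InnerProductSpace ℝ H] [CompleteSpace H]
    [SecondCountableTopology H]
    (ρ : ℝ) (hρ : 0 < ρ) (𝒳 : Set H) (θstar : H)
    (xstar : H) (hxstar : xstar ∈ 𝒳)
    (hxmax : ∀ x ∈ 𝒳, ⟪ x, θstar ⟫ ≤ ⟪ xstar, θstar ⟫)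
    (V : H →L[ℝ] H) (hV : V.IsPositive)
    (c : H) (η : ℝ) (hη : 0 ≤ η)
    (Q Qinv : H →L[ℝ] H)
    (hQpos : Q.IsPositive)
    (hQsq : Q ∘L Q = V + ρ • (1 : H →L[ℝ] H))
    (hQinv : Qinv ∘L Q = 1 ∧ Q ∘L Qinv = 1)
    (hθstar : ‖Q (θstar - c)‖ ≤ η)
    (X θt : H) (hX : X ∈ 𝒳) (hθt : ‖Q (θt - c)‖ ≤ η)
    (hmax : ∀ x ∈ 𝒳, ∀ f : H, ‖Q (f - c)‖ ≤ η → ⟪ f, x ⟫ ≤ ⟪ θt, X ⟫) :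
    ⟪ xstar, θstar ⟫ - ⟪ X, θstar ⟫ ≤ 2 * η * ‖Qinv X‖ := by
  have h1 : ⟪ θstar, xstar ⟫ ≤ ⟪ θt, X ⟫ := hmax xstar hxstar θstar hθstar
  have hQX : Q (Qinv X) = X := by
    have := congrArg (fun T : H →L[ℝ] H => T X) hQinv.2
    simpa using this
  have hsa : ∀ u w : H, ⟪ Q u, w ⟫ = ⟪ u, Q w ⟫ := fun u w => hQpos.1 u w
  have key : ⟪ θt - θstar, X ⟫ ≤ 2 * η * ‖Qinv X‖ := by
    have : ⟪ θt - θstar, X ⟫ = ⟪ Q (θt - θstar), Qinv X ⟫ := by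
      rw [hsa, hQX]
    rw [this]
    calc ⟪ Q (θt - θstar), Qinv X ⟫ ≤ ‖Q (θt - θstar)‖ * ‖Qinv X‖ :=
          real_inner_le_norm _ _
      _ ≤ (2 * η) * ‖Qinv X‖ := by
          apply mul_le_mul_of_nonneg_right _ (norm_nonneg _)
          have : Q (θt - θstar) = Q (θt - c) - Q (θstar - c) := by
            rw [← map_sub]; congr 1; abel
          rw [this]
          calc ‖Q (θt - c) - Q (θstar - c)‖ ≤ ‖Q (θt - c)‖ + ‖Q (θstar - c)‖ :=
                norm_sub_le _ _
            _ ≤ 2 * η := by linarith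
      _ = 2 * η * ‖Qinv X‖ := by ring
  have := real_inner_comm xstar θstar
  have := real_inner_comm X θstar
  have hexp : ⟪ θt - θstar, X ⟫ = ⟪ θt, X ⟫ - ⟪ θstar, X ⟫ := by
    rw [inner_sub_left]
  linarith
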